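/- If SAT is NP-hard for read-twice CNF-formulas, then SAT restricted to undirected path acyclic CNF-formulas is NP-hard. Concretely: for every read-twice CNF-formula F, the formula F' obtained by adding a new variable x and a clause containing all variables of F together with x (as in the Samer–Szeider construction) is undirected path acyclic, and F' is satisfiable iff F is. -/

import Mathlib

variable {V : Type} [DecidableEq V]

/-- A join tree of a hypergraph with edge set `E`: a tree on node set `E` such that
for every vertex `v`, the edges containing `v` induce a connected subtree. -/
structure JoinTreeOf (E : Finset (Finset V)) where
  T : SimpleGraph {f // f ∈ E}
  isTree : T.IsTree
  conn : ∀ v : V, (T.induce {f : {f // f ∈ E} | v ∈ f.1}).Preconnected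

/-- `x` lies on the (unique) path from `r` to `y` in `G`. -/
def onTreePath {α : Type} (G : SimpleGraph α) (r y x : α) : Prop :=
  ∀ p : G.Walk r y, p.IsPath → x ∈ p.support

/-- A disjoint branches decomposition of the hypergraph with edge set `E`, rooted at `root`:
a join tree rooted at `root` in which any two edges on different branches
(neither an ancestor of the other) are disjoint. -/
structure DBD (E : Finset (Finset V)) (root : Finset V) where
  J : JoinTreeOf E
  rootMem : root ∈ E
  disj : ∀ a b : {f // f ∈ E}, a ≠ b →
    ¬ onTreePath J.T ⟨root, rootMem⟩ b a →
    ¬ onTreePath J.T ⟨root, rootMem⟩ a b →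
    a.1 ∩ b.1 = ∅

/-- `H` is db-rootable in `e`. -/
def DbRootable (E : Finset (Finset V)) (e : Finset V) : Prop := Nonempty (DBD E e)

/-- Two hyperedges are linked by a path of pairwise-intersecting edges of `E`. -/
def edgeLinked (E : Finset (Finset V)) (a b : Finset V) : Prop :=
  Relation.ReflTransGen (fun x y => x ∈ E ∧ y ∈ E ∧ (x ∩ y).Nonempty) a b

open Classical in
/-- The connected component (as a set of edges) of the edge `e` in the hypergraph `E`. -/
noncomputable def component (E : Finset (Finset V)) (e : Finset V) : Finset (Finset V) :=
  E.filter (edgeLinked E e)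

/-- `C` is (the edge set of) a connected component of the hypergraph with edge set `E`. -/
def IsComponent (E C : Finset (Finset V)) : Prop := ∃ e ∈ E, C = component E e

/-- The hypergraph with edge set `E` is connected. -/
def HGConnected (E : Finset (Finset V)) : Prop := ∀ a ∈ E, ∀ b ∈ E, edgeLinked E a b

/-- Vertices `u` and `w` are connected by a path of edges in `E`. -/
def vtxLinked (E : Finset (Finset V)) (u w : V) : Prop :=
  Relation.ReflTransGen (fun x y => ∃ f ∈ E, x ∈ f ∧ y ∈ f) u w

/-- The hypergraph has a join path: a join tree whose underlying tree is a path
(every node has at most two neighbours). -/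
def HasJoinPath (E : Finset (Finset V)) : Prop :=
  ∃ J : JoinTreeOf E, ∀ f : {f // f ∈ E}, (J.T.neighborSet f).ncard ≤ 2

/-- A clause: a finite set of literals (variable, sign). -/
abbrev Clause (V : Type) := Finset (V × Bool)

/-- A CNF-formula: a finite set of clauses. -/
abbrev CNF (V : Type) := Finset (Clause V)

/-- An assignment satisfies a clause if it makes some literal true. -/
def satClause (b : V → Bool) (c : Clause V) : Prop := ∃ p ∈ c, b p.1 = p.2

/-- An assignment satisfies a CNF-formula if it satisfies every clause. -/
def satCNF (b : V → Bool) (F : CNF V) : Prop := ∀ c ∈ F, satClause b c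

/-- The variables of a CNF-formula. -/
def cnfVars (F : CNF V) : Finset V := F.sup fun c => c.image Prod.fst

/-- The hypergraph of a CNF-formula: one hyperedge per clause, containing its variables. -/
def cnfHyp (F : CNF V) : Finset (Finset V) := F.image fun c => c.image Prod.fst

/-- A CNF-formula is read-twice if every variable appears in at most two clauses. -/
def ReadTwice (F : CNF V) : Prop :=
  ∀ v : V, (F.filter fun c => ∃ s, (v, s) ∈ c).card ≤ 2

/-- A hypergraph is undirected path acyclic if it has a join tree in which, for every
vertex `v`, the edges containing `v` form an (undirected) path: the induced subtree is
connected and every node has at most two neighbours within it. -/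
def UPAcyclic (E : Finset (Finset V)) : Prop :=
  ∃ J : JoinTreeOf E, ∀ v : V,
    ∀ x : {f : {f // f ∈ E} | v ∈ f.1.1},
      ((J.T.induce {f : {f // f ∈ E} | v ∈ f.1.1}).neighborSet x).ncard ≤ 2

section Aux

lemma memEq {α : Type} {a b : α} {l : List α} (h : a = b) (hm : b ∈ l) : a ∈ l := h ▸ hm

def starG {α : Type} (c : α) : SimpleGraph α where
  Adj u v := u ≠ v ∧ (u = c ∨ v = c)
  symm := ⟨by intro u v ⟨h1, h2⟩; exact ⟨h1.symm, h2.symm⟩⟩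
  loopless := ⟨by intro u ⟨h1, _⟩; exact h1 rfl⟩

open SimpleGraph in
lemma starG_acyclic {α : Type} (c : α) : (starG c).IsAcyclic := by
  intro u p hp
  have h3 := hp.three_le_length
  match p with
  | .nil => simp at h3
  | .cons h .nil => simp at h3
  | .cons (v := w₁) h₁ (.cons (v := w₂) h₂ r) =>
    have hnd : (w₁ :: w₂ :: r.support.tail).Nodup := by
      have := hp.2
      simpa [SimpleGraph.Walk.support_cons, ← SimpleGraph.Walk.support_eq_cons r] using this
    have hrsup : r.support = w₂ :: r.support.tail := (SimpleGraph.Walk.support_eq_cons r)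
    rcases h₁.2 with hu | hw₁
    · have hw₂ : w₂ = c := by
        rcases h₂.2 with h | h
        · exact absurd (h.trans hu.symm) (fun hh => h₁.1 hh.symm)
        · exact h
      match r with
      | .nil => simp at h3
      | .cons h₃ r' =>
        have h1 : u ∈ r'.support := r'.end_mem_support
        have h2 : w₂ ∈ r'.support := memEq (hw₂.trans hu.symm) h1
        have htl : (Walk.cons h₃ r').support.tail = r'.support := by simp
        exact (List.Nodup.notMem (hnd.of_cons) (htl ▸ h2)).elim
    · have hcr : c ∈ r.support := by
        by_cases hu : u = c
        · exact memEq hu.symm r.end_mem_support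
        · match r with
          | .nil => simp at h3
          | .cons (v := w₃) h₃ r' =>
            have hw₂ : w₂ ≠ c := fun hh => h₂.1 (hw₁.trans hh.symm)
            have hw₃ : w₃ = c := by rcases h₃.2 with h | h; exacts [absurd h hw₂, h]
            have : w₃ ∈ (Walk.cons h₃ r').support := by
              rw [Walk.support_cons]; exact List.mem_cons_of_mem _ r'.start_mem_support
            exact memEq hw₃.symm this
      have : w₁ ∈ w₂ :: r.support.tail := hrsup ▸ memEq hw₁ hcr
      exact ((List.nodup_cons.mp hnd).1 this).elim

open SimpleGraph in
lemma starG_preconnected {α : Type} (c : α) : (starG c).Preconnected := by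
  intro a b
  have key : ∀ z : α, (starG c).Reachable z c := by
    intro z
    by_cases hz : z = c
    · exact hz ▸ Reachable.refl z
    · exact Adj.reachable ⟨hz, Or.inr rfl⟩
  exact (key a).trans (key b).symm

lemma starG_isTree {α : Type} (c : α) : (starG c).IsTree :=
  ⟨{ preconnected := starG_preconnected c, nonempty := ⟨c⟩ }, starG_acyclic c⟩

end Aux

open SimpleGraph in
lemma star_UPAcyclic (E : Finset (Finset V)) (R : Finset V) (hER : R ∈ E)
    (hsub : ∀ e ∈ E, e ⊆ R)
    (hdeg : ∀ v : V, (E.filter fun e => v ∈ e ∧ e ≠ R).card ≤ 2) :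
    UPAcyclic E := by
  classical
  set c : {f // f ∈ E} := ⟨R, hER⟩ with hc
  refine ⟨⟨starG c, starG_isTree c, ?_⟩, ?_⟩
  · intro v a b
    have hvc : v ∈ (c : {f // f ∈ E}).1 := hsub a.1.1 a.1.2 a.2
    set c' : {f : {f // f ∈ E} | v ∈ f.1} := ⟨c, hvc⟩ with hc'
    have key : ∀ z : {f : {f // f ∈ E} | v ∈ f.1},
        ((starG c).induce {f : {f // f ∈ E} | v ∈ f.1}).Reachable z c' := by
      intro z
      by_cases hz : z = c'
      · exact hz ▸ Reachable.refl z
      · refine Adj.reachable ?_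
        show (starG c).Adj z.1 c'.1
        exact ⟨fun hh => hz (Subtype.ext hh), Or.inr rfl⟩
    exact (key a).trans (key b).symm
  · intro v x'
    by_cases hx' : x'.1 = c
    · set S := E.filter fun e => v ∈ e ∧ e ≠ R with hS
      have hinj : Set.InjOn (fun y : {f : {f // f ∈ E} | v ∈ f.1.1} => y.1.1)
          (((starG c).induce {f : {f // f ∈ E} | v ∈ f.1.1}).neighborSet x') := by
        intro y1 _ y2 _ h
        exact Subtype.ext (Subtype.ext h)
      have hsubst : (fun y : {f : {f // f ∈ E} | v ∈ f.1.1} => y.1.1) ''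
          (((starG c).induce {f : {f // f ∈ E} | v ∈ f.1.1}).neighborSet x') ⊆ ↑S := by
        rintro e ⟨y, hy, rfl⟩
        have hadj : (starG c).Adj x'.1 y.1 := hy
        have hyc : y.1 ≠ c := by
          intro hh
          exact hadj.1 (hx'.trans hh.symm)
        simp only [hS, Finset.coe_filter, Set.mem_setOf_eq]
        refine ⟨y.1.2, y.2, fun hh => hyc (Subtype.ext hh)⟩
      calc (((starG c).induce {f : {f // f ∈ E} | v ∈ f.1.1}).neighborSet x').ncard
          = ((fun y : {f : {f // f ∈ E} | v ∈ f.1.1} => y.1.1) ''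
            (((starG c).induce {f : {f // f ∈ E} | v ∈ f.1.1}).neighborSet x')).ncard :=
            (Set.ncard_image_of_injOn hinj).symm
        _ ≤ (↑S : Set (Finset V)).ncard := Set.ncard_le_ncard hsubst (S : Set (Finset V)).toFinite
        _ = S.card := Set.ncard_coe_finset S
        _ ≤ 2 := hdeg v
    · have hvc : v ∈ (c : {f // f ∈ E}).1 := hsub x'.1.1 x'.1.2 x'.2
      have hsub1 : (((starG c).induce {f : {f // f ∈ E} | v ∈ f.1.1}).neighborSet x')
          ⊆ {(⟨c, hvc⟩ : {f : {f // f ∈ E} | v ∈ f.1.1})} := by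
        intro y hy
        have hadj : (starG c).Adj x'.1 y.1 := hy
        rcases hadj.2 with h | h
        · exact absurd h hx'
        · exact Set.mem_singleton_iff.mpr (Subtype.ext h)
      calc (((starG c).induce {f : {f // f ∈ E} | v ∈ f.1.1}).neighborSet x').ncard
          ≤ ({(⟨c, hvc⟩ : {f : {f // f ∈ E} | v ∈ f.1.1})} : Set _).ncard :=
            Set.ncard_le_ncard hsub1 (Set.finite_singleton _)
        _ = 1 := Set.ncard_singleton _
        _ ≤ 2 := by norm_num


/-- for every read-twice CNF-formula `F` and fresh variable `x`, the
formula `F'` obtained by adding a clause containing all variables of `F` together with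
`x` (the Samer–Szeider construction) is undirected path acyclic, and `F'` is
satisfiable iff `F` is. Hence NP-hardness of SAT for read-twice formulas implies
NP-hardness of SAT for undirected path acyclic formulas. -/
theorem stmt17 (F : CNF V) (x : V) (hx : x ∉ cnfVars F) (hrt : ReadTwice F) :
    UPAcyclic (cnfHyp (insert (insert (x, true) ((cnfVars F).image fun v => (v, true))) F)) ∧
    ((∃ b : V → Bool,
        satCNF b (insert (insert (x, true) ((cnfVars F).image fun v => (v, true))) F)) ↔
      (∃ b : V → Bool, satCNF b F)) := by
  classical
  set bigC : Clause V := insert (x, true) ((cnfVars F).image fun v => (v, true)) with hbigC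
  set R : Finset V := insert x (cnfVars F) with hR
  have himg : bigC.image Prod.fst = R := by
    simp only [hbigC, hR, Finset.image_insert, Finset.image_image]
    congr 1
    ext a
    simp
  have hE : cnfHyp (insert bigC F) = insert R (cnfHyp F) := by
    simp [cnfHyp, Finset.image_insert, himg]
  have hclause_sub : ∀ c ∈ F, c.image Prod.fst ⊆ cnfVars F := by
    intro c hc
    exact Finset.le_sup (f := fun c : Clause V => c.image Prod.fst) hc
  constructor
  · -- UPAcyclic
    rw [hE]
    apply star_UPAcyclic _ R (Finset.mem_insert_self _ _)
    · intro e he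
      rcases Finset.mem_insert.mp he with rfl | he
      · exact subset_rfl
      · rcases Finset.mem_image.mp he with ⟨c, hc, rfl⟩
        exact (hclause_sub c hc).trans (Finset.subset_insert _ _)
    · intro v
      have h1 : (insert R (cnfHyp F)).filter (fun e => v ∈ e ∧ e ≠ R) ⊆
          (cnfHyp F).filter (fun e => v ∈ e) := by
        intro e he
        rcases Finset.mem_filter.mp he with ⟨he1, hv, hne⟩
        rcases Finset.mem_insert.mp he1 with rfl | he1
        · exact absurd rfl hne
        · exact Finset.mem_filter.mpr ⟨he1, hv⟩
      have h2 : (cnfHyp F).filter (fun e => v ∈ e) ⊆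
          (F.filter fun c => ∃ s, (v, s) ∈ c).image (fun c => c.image Prod.fst) := by
        intro e he
        rcases Finset.mem_filter.mp he with ⟨he1, hv⟩
        rcases Finset.mem_image.mp he1 with ⟨c, hc, rfl⟩
        rcases Finset.mem_image.mp hv with ⟨p, hp, hpv⟩
        refine Finset.mem_image.mpr ⟨c, Finset.mem_filter.mpr ⟨hc, ⟨p.2, ?_⟩⟩, rfl⟩
        have : (v, p.2) = p := by rw [← hpv]
        exact this ▸ hp
      calc ((insert R (cnfHyp F)).filter (fun e => v ∈ e ∧ e ≠ R)).card
          ≤ ((cnfHyp F).filter (fun e => v ∈ e)).card := Finset.card_le_card h1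
        _ ≤ ((F.filter fun c => ∃ s, (v, s) ∈ c).image (fun c => c.image Prod.fst)).card :=
            Finset.card_le_card h2
        _ ≤ (F.filter fun c => ∃ s, (v, s) ∈ c).card := Finset.card_image_le
        _ ≤ 2 := hrt v
  · -- satisfiability
    constructor
    · rintro ⟨b, hb⟩
      exact ⟨b, fun c hc => hb c (Finset.mem_insert_of_mem hc)⟩
    · rintro ⟨b, hb⟩
      refine ⟨fun v => if v = x then true else b v, ?_⟩
      intro c hc
      rcases Finset.mem_insert.mp hc with rfl | hc
      · exact ⟨(x, true), Finset.mem_insert_self _ _, by simp⟩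
      · rcases hb c hc with ⟨p, hp, hbp⟩
        refine ⟨p, hp, ?_⟩
        have hpx : p.1 ≠ x := by
          intro hh
          apply hx
          have : p.1 ∈ c.image Prod.fst := Finset.mem_image_of_mem _ hp
          exact hh ▸ hclause_sub c hc this
        simp [hpx, hbp]
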